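/- Let Q* be a fixed point of the Bellman operator F, let π* be a greedy policy with respect to Q*, let ε > 0 satisfy γ + ε < 1, let w ∈ ℝ^{S×A} be entrywise strictly positive, and let v = Σ_{i=0}^∞ (γ+ε)^{−i} (A_{π*}ᵀ)ⁱ w. If Q₀ ≤ Q* entrywise, then for every k ≥ 0 the value iteration iterates Q_k = F^k Q₀ satisfy (γ+ε)^k · vᵀ(Q₀ − Q*) ≤ vᵀ(Q_k − Q*) ≤ 0. -/

import Mathlib

open Finset Matrix

/-- The Bellman operator `F` for a discounted MDP:
`(F Q)(s,a) = R(s,a) + γ * Σ_{s'} P(s'|s,a) * max_{a'} Q(s',a')`. -/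
noncomputable def bellman {S A : Type*} [Fintype S] [Fintype A] [Nonempty A]
    (γ : ℝ) (P : S → A → S → ℝ) (R : S → A → ℝ) (Q : S × A → ℝ) : S × A → ℝ :=
  fun p =>
    R p.1 p.2 +
      γ * ∑ s' : S, P p.1 p.2 s' * Finset.univ.sup' Finset.univ_nonempty (fun a' => Q (s', a'))

/-- The matrix of the linear map `A_π` on `ℝ^{S×A}` associated with a deterministic
policy `π : S → A`: `(A_π x)(s,a) = γ * Σ_{s'} P(s'|s,a) * x(s', π(s'))`.
Its entry at row `(s,a)`, column `(s',a')` is `γ * P(s'|s,a)` if `a' = π s'`, else `0`. -/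
noncomputable def polMat {S A : Type*} [Fintype S] [Fintype A] [DecidableEq A]
    (γ : ℝ) (P : S → A → S → ℝ) (π : S → A) : Matrix (S × A) (S × A) ℝ :=
  Matrix.of fun p q => if q.2 = π q.1 then γ * P p.1 p.2 q.1 else 0

/-- linear Lyapunov exponential bound on the shifted orthant: under the
setting of STATEMENT 16, if `Q₀ ≤ Q*` entrywise, then for all `k ≥ 0` the iterates
`Q_k = F^k Q₀` satisfy `(γ+ε)^k vᵀ(Q₀ − Q*) ≤ vᵀ(Q_k − Q*) ≤ 0`. -/
theorem stmt17 {S A : Type*} [Fintype S] [Fintype A] [Nonempty S] [Nonempty A]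
    [DecidableEq S] [DecidableEq A]
    (γ ε : ℝ) (hγ0 : 0 ≤ γ) (hγ1 : γ < 1) (hε : 0 < ε) (hγε : γ + ε < 1)
    (P : S → A → S → ℝ) (hP0 : ∀ s a s', 0 ≤ P s a s')
    (hP1 : ∀ s a, ∑ s' : S, P s a s' = 1)
    (R : S → A → ℝ)
    (Qstar : S × A → ℝ) (hfix : bellman γ P R Qstar = Qstar)
    (πstar : S → A)
    (hgreedy : ∀ s : S,
      Qstar (s, πstar s) = Finset.univ.sup' Finset.univ_nonempty (fun a => Qstar (s, a)))
    (w : S × A → ℝ) (hw : ∀ p, 0 < w p)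
    (v : S × A → ℝ)
    (hv : v = ∑' i : ℕ, ((γ + ε)⁻¹ ^ i) • ((polMat γ P πstar)ᵀ ^ i).mulVec w)
    (Q₀ : S × A → ℝ) (hQ₀ : Q₀ ≤ Qstar) :
    ∀ k : ℕ,
      (γ + ε) ^ k * (v ⬝ᵥ (Q₀ - Qstar)) ≤ v ⬝ᵥ ((bellman γ P R)^[k] Q₀ - Qstar) ∧
        v ⬝ᵥ ((bellman γ P R)^[k] Q₀ - Qstar) ≤ 0 := by
  set Aπ := polMat γ P πstar with hAπdef
  have hc : (0:ℝ) < γ + ε := by linarith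
  have hcne : (γ + ε) ≠ 0 := ne_of_gt hc
  -- entries of Aπ are nonnegative
  have hA0 : ∀ p q, 0 ≤ Aπ p q := by
    intro p q
    simp only [hAπdef, polMat, Matrix.of_apply]
    split_ifs
    · exact mul_nonneg hγ0 (hP0 _ _ _)
    · exact le_refl 0
  -- entries of Aπ ^ i are nonnegative
  have hApow0 : ∀ (i : ℕ) (p q : S × A), 0 ≤ (Aπ ^ i) p q := by
    intro i
    induction i with
    | zero =>
      intro p q
      simp only [pow_zero, Matrix.one_apply]
      split_ifs <;> norm_num
    | succ n ih =>
      intro p q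
      rw [pow_succ, Matrix.mul_apply]
      exact Finset.sum_nonneg fun r _ => mul_nonneg (ih p r) (hA0 r q)
  -- row sums of Aπ equal γ
  have hArow : ∀ p : S × A, ∑ q : S × A, Aπ p q = γ := by
    intro p
    rw [Fintype.sum_prod_type]
    simp only [hAπdef, polMat, Matrix.of_apply]
    have h1 : ∀ s' : S,
        (∑ a' : A, if a' = πstar s' then γ * P p.1 p.2 s' else 0) = γ * P p.1 p.2 s' := by
      intro s'
      rw [Finset.sum_ite_eq' Finset.univ (πstar s') (fun _ => γ * P p.1 p.2 s')]
      simp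
    simp_rw [h1, ← Finset.mul_sum, hP1, mul_one]
  -- row sums of Aπ ^ i equal γ ^ i
  have hApowrow : ∀ (i : ℕ) (p : S × A), ∑ q : S × A, (Aπ ^ i) p q = γ ^ i := by
    intro i
    induction i with
    | zero => intro p; simp [Matrix.one_apply]
    | succ n ih =>
      intro p
      rw [pow_succ']
      simp_rw [Matrix.mul_apply]
      rw [Finset.sum_comm]
      simp_rw [← Finset.mul_sum, ih]
      rw [← Finset.sum_mul, hArow]
      ring
  -- entry bound
  have hApowle : ∀ (i : ℕ) (p q : S × A), (Aπ ^ i) p q ≤ γ ^ i := by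
    intro i p q
    calc (Aπ ^ i) p q ≤ ∑ r : S × A, (Aπ ^ i) p r :=
          Finset.single_le_sum (fun r _ => hApow0 i p r) (Finset.mem_univ q)
      _ = γ ^ i := hApowrow i p
  -- the summand, pointwise
  set g : ℕ → (S × A) → ℝ :=
    fun i => ((γ + ε)⁻¹ ^ i) • ((Aπᵀ ^ i).mulVec w) with hgdef
  have hgval : ∀ (i : ℕ) (p : S × A),
      g i p = (γ + ε)⁻¹ ^ i * ∑ q : S × A, (Aπ ^ i) q p * w q := by
    intro i p
    simp only [hgdef, Pi.smul_apply, smul_eq_mul, Matrix.mulVec, dotProduct,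
      ← Matrix.transpose_pow, Matrix.transpose_apply]
  have hg0 : ∀ (i : ℕ) (p : S × A), 0 ≤ g i p := by
    intro i p
    rw [hgval]
    exact mul_nonneg (pow_nonneg (inv_nonneg.mpr hc.le) i)
      (Finset.sum_nonneg fun q _ => mul_nonneg (hApow0 i q p) (hw q).le)
  have hgle : ∀ (i : ℕ) (p : S × A),
      g i p ≤ (γ * (γ + ε)⁻¹) ^ i * ∑ q : S × A, w q := by
    intro i p
    rw [hgval, mul_pow, mul_comm (γ ^ i), mul_assoc]
    refine mul_le_mul_of_nonneg_left ?_ (pow_nonneg (inv_nonneg.mpr hc.le) i)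
    calc ∑ q : S × A, (Aπ ^ i) q p * w q ≤ ∑ q : S × A, γ ^ i * w q :=
          Finset.sum_le_sum fun q _ => mul_le_mul_of_nonneg_right (hApowle i q p) (hw q).le
      _ = γ ^ i * ∑ q : S × A, w q := by rw [Finset.mul_sum]
  have hratio : γ * (γ + ε)⁻¹ < 1 := by
    rw [mul_inv_lt_iff₀ hc, one_mul]; linarith
  have hratio0 : 0 ≤ γ * (γ + ε)⁻¹ := mul_nonneg hγ0 (inv_nonneg.mpr hc.le)
  -- summability pointwise
  have hsum : ∀ p : S × A, Summable fun i => g i p := by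
    intro p
    refine Summable.of_nonneg_of_le (fun i => hg0 i p) (fun i => hgle i p) ?_
    exact (summable_geometric_of_lt_one hratio0 hratio).mul_right _
  have hgsummable : Summable g := Pi.summable.mpr hsum
  have hvp : ∀ p : S × A, v p = ∑' i : ℕ, g i p := by
    intro p
    rw [hv]
    exact tsum_apply hgsummable
  -- v is nonnegative
  have hv0 : ∀ p : S × A, 0 ≤ v p := by
    intro p
    rw [hvp]
    exact tsum_nonneg fun i => hg0 i p
  -- key identity : Aπᵀ.mulVec v = (γ+ε) • (v - w)
  have hAv : ∀ p : S × A, (Aπᵀ.mulVec v) p = (γ + ε) * (v p - w p) := by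
    intro p
    have step1 : (Aπᵀ.mulVec v) p = ∑ q : S × A, Aπ q p * v q := by
      simp [Matrix.mulVec, dotProduct, Matrix.transpose_apply]
    have step2 : ∀ q : S × A, Aπ q p * v q = ∑' i : ℕ, Aπ q p * g i q := by
      intro q; rw [hvp, tsum_mul_left]
    have step3 : (Aπᵀ.mulVec v) p = ∑' i : ℕ, ∑ q : S × A, Aπ q p * g i q := by
      rw [step1]
      simp_rw [step2]
      exact (Summable.tsum_finsetSum fun q _ => ((hsum q).mul_left _)).symm
    have step4 : ∀ i : ℕ, (∑ q : S × A, Aπ q p * g i q) = (γ + ε) * g (i + 1) p := by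
      intro i
      have hgiq : ∀ q : S × A, Aπ q p * g i q
          = (γ + ε)⁻¹ ^ i * (Aπ q p * ((Aπᵀ ^ i).mulVec w) q) := by
        intro q; simp only [hgdef, Pi.smul_apply, smul_eq_mul]; ring
      have : (∑ q : S × A, Aπ q p * g i q)
          = (γ + ε)⁻¹ ^ i * (Aπᵀ.mulVec ((Aπᵀ ^ i).mulVec w)) p := by
        simp_rw [hgiq]
        rw [← Finset.mul_sum]
        congr 1
      rw [this, Matrix.mulVec_mulVec, ← pow_succ']
      have hgv : g (i + 1) p = (γ + ε)⁻¹ ^ (i + 1) * ((Aπᵀ ^ (i + 1)).mulVec w) p := by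
        simp [hgdef]
      rw [hgv]
      have hinv : (γ + ε) * (γ + ε)⁻¹ = 1 := mul_inv_cancel₀ hcne
      linear_combination (-(γ + ε)⁻¹ ^ i * (Aπᵀ ^ (i + 1) *ᵥ w) p) * hinv
    rw [step3]
    simp_rw [step4]
    rw [tsum_mul_left]
    have hshift : ∑' i : ℕ, g (i + 1) p = v p - w p := by
      have := Summable.tsum_eq_zero_add (hsum p)
      have hg00 : g 0 p = w p := by simp [hgdef]
      rw [hg00] at this
      rw [hvp p, this]; ring
    rw [hshift]
  -- monotonicity of the Bellman operator
  have hmono : ∀ Q Q' : S × A → ℝ, Q ≤ Q' → bellman γ P R Q ≤ bellman γ P R Q' := by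
    intro Q Q' h p
    simp only [bellman]
    refine add_le_add le_rfl (mul_le_mul_of_nonneg_left ?_ hγ0)
    refine Finset.sum_le_sum fun s' _ => mul_le_mul_of_nonneg_left ?_ (hP0 _ _ _)
    exact Finset.sup'_le _ _ fun a' _ =>
      (h (s', a')).trans (Finset.le_sup' (fun a' => Q' (s', a')) (Finset.mem_univ a'))
  -- all iterates stay below Qstar
  have hle : ∀ k : ℕ, (bellman γ P R)^[k] Q₀ ≤ Qstar := by
    intro k
    induction k with
    | zero => simpa using hQ₀
    | succ n ih =>
      rw [Function.iterate_succ_apply']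
      calc bellman γ P R ((bellman γ P R)^[n] Q₀) ≤ bellman γ P R Qstar := hmono _ _ ih
        _ = Qstar := hfix
  -- step inequality, pointwise
  have hstep : ∀ Q : S × A → ℝ, Q ≤ Qstar → ∀ p : S × A,
      (Aπ.mulVec (Q - Qstar)) p ≤ (bellman γ P R Q - Qstar) p := by
    intro Q hQ p
    have hlhs : (Aπ.mulVec (Q - Qstar)) p
        = γ * ∑ s' : S, P p.1 p.2 s' * ((Q - Qstar) (s', πstar s')) := by
      simp only [Matrix.mulVec, dotProduct]
      rw [Fintype.sum_prod_type]
      simp only [hAπdef, polMat, Matrix.of_apply, ite_mul, zero_mul]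
      have h1 : ∀ s' : S,
          (∑ a' : A, if a' = πstar s' then γ * P p.1 p.2 s' * (Q - Qstar) (s', a') else 0)
            = γ * P p.1 p.2 s' * (Q - Qstar) (s', πstar s') := by
        intro s'
        rw [Finset.sum_ite_eq' Finset.univ (πstar s')
          (fun a' => γ * P p.1 p.2 s' * (Q - Qstar) (s', a'))]
        simp
      simp_rw [h1, Finset.mul_sum]
      congr 1; ext s'; ring
    have hrhs : (bellman γ P R Q - Qstar) p
        = γ * ∑ s' : S, P p.1 p.2 s' *
            ((Finset.univ.sup' Finset.univ_nonempty fun a' => Q (s', a'))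
              - (Finset.univ.sup' Finset.univ_nonempty fun a' => Qstar (s', a'))) := by
      have hq : Qstar p = R p.1 p.2 + γ * ∑ s' : S, P p.1 p.2 s' *
          (Finset.univ.sup' Finset.univ_nonempty fun a' => Qstar (s', a')) := by
        conv_lhs => rw [← hfix]
        rfl
      simp only [Pi.sub_apply, bellman, hq, mul_sub, Finset.sum_sub_distrib]
      ring
    rw [hlhs, hrhs]
    refine mul_le_mul_of_nonneg_left ?_ hγ0
    refine Finset.sum_le_sum fun s' _ => mul_le_mul_of_nonneg_left ?_ (hP0 _ _ _)
    have h1 : Q (s', πstar s') ≤ Finset.univ.sup' Finset.univ_nonempty fun a' => Q (s', a') :=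
      Finset.le_sup' (fun a' => Q (s', a')) (Finset.mem_univ (πstar s'))
    have h2 : (Finset.univ.sup' Finset.univ_nonempty fun a' => Qstar (s', a'))
        = Qstar (s', πstar s') := (hgreedy s').symm
    simp only [Pi.sub_apply]
    rw [h2]
    linarith
  -- nonpositive dot product
  have hdotn : ∀ x : S × A → ℝ, x ≤ 0 → v ⬝ᵥ x ≤ 0 := by
    intro x hx
    refine Finset.sum_nonpos fun p _ => ?_
    exact mul_nonpos_iff.mpr (Or.inl ⟨hv0 p, hx p⟩)
  -- key contraction inequality
  have hkey : ∀ Q : S × A → ℝ, Q ≤ Qstar →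
      (γ + ε) * (v ⬝ᵥ (Q - Qstar)) ≤ v ⬝ᵥ (bellman γ P R Q - Qstar) := by
    intro Q hQ
    have h1 : v ⬝ᵥ (Aπ.mulVec (Q - Qstar)) ≤ v ⬝ᵥ (bellman γ P R Q - Qstar) := by
      refine Finset.sum_le_sum fun p _ => mul_le_mul_of_nonneg_left (hstep Q hQ p) (hv0 p)
    have h2 : v ⬝ᵥ (Aπ.mulVec (Q - Qstar)) = (Aπᵀ.mulVec v) ⬝ᵥ (Q - Qstar) := by
      rw [Matrix.dotProduct_mulVec, Matrix.mulVec_transpose]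
    have h3 : (γ + ε) * (v ⬝ᵥ (Q - Qstar)) ≤ (Aπᵀ.mulVec v) ⬝ᵥ (Q - Qstar) := by
      simp only [dotProduct, Finset.mul_sum]
      refine Finset.sum_le_sum fun p _ => ?_
      rw [hAv p]
      have hx : (Q - Qstar) p ≤ 0 := sub_nonpos.mpr (hQ p)
      nlinarith [mul_nonneg (mul_nonneg hc.le (hw p).le) (neg_nonneg.mpr hx)]
    exact le_trans (h3.trans (le_of_eq h2.symm)) h1
  -- main induction
  intro k
  induction k with
  | zero =>
    constructor
    · simp
    · exact hdotn _ fun p => sub_nonpos.mpr (hQ₀ p)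
  | succ n ih =>
    have hiter : (bellman γ P R)^[n + 1] Q₀ = bellman γ P R ((bellman γ P R)^[n] Q₀) :=
      Function.iterate_succ_apply' _ _ _
    constructor
    · have h1 : (γ + ε) ^ (n + 1) * (v ⬝ᵥ (Q₀ - Qstar))
          ≤ (γ + ε) * (v ⬝ᵥ ((bellman γ P R)^[n] Q₀ - Qstar)) := by
        rw [pow_succ, mul_comm ((γ+ε)^n), mul_assoc]
        exact mul_le_mul_of_nonneg_left ih.1 hc.le
      rw [hiter]
      exact h1.trans (hkey _ (hle n))
    · refine hdotn _ fun p => sub_nonpos.mpr ?_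
      exact hle (n + 1) p
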